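/- Let v be a vertex of generation number d in D_{m,k} (1 ≤ d ≤ m). Then the closed ball of radius 2^{d−1} around v is exactly the union of the two subdiamonds of diameter 2^{d−1} that share v as their common top/bottom vertex. -/

import Mathlib

open SimpleGraph

/-- One subdivision step: replace each edge of `G` by internally disjoint
paths of length 2 indexed by `ι`. -/
def diamondStep {V : Type} (ι : Type) (G : SimpleGraph V) :
    SimpleGraph (V ⊕ (G.edgeSet × ι)) where
  Adj x y :=
    match x, y with
    | Sum.inl u, Sum.inr e => u ∈ (e.1 : Sym2 V)
    | Sum.inr e, Sum.inl u => u ∈ (e.1 : Sym2 V)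
    | _, _ => False
  symm := ⟨by rintro (u | e) (v | f) h <;> simp_all⟩
  loopless := ⟨by rintro (u | e) h <;> simp_all⟩

/-- The diamond graphs `D_{n,k}` with branch index type `ι` (take `ι = Fin k`
for branching `k` and `ι = ℕ` for infinite branching). -/
def Diamond (ι : Type) : (n : ℕ) → Σ V : Type, SimpleGraph V
  | 0 => ⟨Bool, ⊤⟩
  | n + 1 => ⟨_, diamondStep ι (Diamond ι n).2⟩

/-- Vertex set of the diamond graph. -/
abbrev diamV (ι : Type) (n : ℕ) : Type := (Diamond ι n).1

/-- The diamond graph as a `SimpleGraph`. -/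
abbrev diamG (ι : Type) (n : ℕ) : SimpleGraph (diamV ι n) := (Diamond ι n).2

/-- The two original vertices: `diamOrig ι n false` is the bottom,
`diamOrig ι n true` is the top of `D_{n,k}`. -/
def diamOrig (ι : Type) : (n : ℕ) → Bool → diamV ι n
  | 0, b => b
  | n + 1, b => Sum.inl (diamOrig ι n b)

/-- The bottom vertex of the diamond. -/
def diamBottom (ι : Type) (n : ℕ) : diamV ι n := diamOrig ι n false

/-- The top vertex of the diamond. -/
def diamTop (ι : Type) (n : ℕ) : diamV ι n := diamOrig ι n true

/-- The canonical injection of `D_{n,k}` into `D_{n+j,k}`: each vertex is sent to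
the vertex it evolves into. -/
def diamLift (ι : Type) (n : ℕ) : (j : ℕ) → diamV ι n → diamV ι (n + j)
  | 0, x => x
  | j + 1, x => Sum.inl (diamLift ι n j x)

/-- The complete binary tree of depth `n`: vertices are binary strings of
length `≤ n`. -/
def treeV (n : ℕ) : Type := {l : List Bool // l.length ≤ n}

/-- The graph structure of the binary tree `T_n`: a vertex is adjacent to its
one-letter extensions. -/
def treeG (n : ℕ) : SimpleGraph (treeV n) where
  Adj u v := (∃ b, v.1 = b :: u.1) ∨ (∃ b, u.1 = b :: v.1)
  symm := by tauto
  loopless := ⟨by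
    rintro ⟨l, hl⟩ (⟨b, hb⟩ | ⟨b, hb⟩) <;>
      simpa using congrArg List.length hb⟩

/-- The root of the binary tree. -/
def treeRoot (n : ℕ) : treeV n := ⟨[], by simp⟩

/-- The midpoint vertex of one of the `k` paths of length 2 replacing the edge
`uv` at the next construction step. -/
def diamMid (ι : Type) {j : ℕ} {u v : diamV ι j} (h : (diamG ι j).Adj u v) (i : ι) :
    diamV ι (j + 1) :=
  Sum.inr (⟨s(u, v), (diamG ι j).mem_edgeSet.mpr h⟩, i)

lemma diamMid_adj_left (ι : Type) {j : ℕ} {u v : diamV ι j}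
    (h : (diamG ι j).Adj u v) (i : ι) :
    (diamG ι (j + 1)).Adj (Sum.inl u) (diamMid ι h i) := by
  show u ∈ (s(u,v) : Sym2 (diamV ι j))
  exact Sym2.mem_mk_left u v

lemma diamMid_adj_right (ι : Type) {j : ℕ} {u v : diamV ι j}
    (h : (diamG ι j).Adj u v) (i : ι) :
    (diamG ι (j + 1)).Adj (diamMid ι h i) (Sum.inl v) := by
  show v ∈ (s(u,v) : Sym2 (diamV ι j))
  exact Sym2.mem_mk_right u v

/-- The graph homomorphism of `D_{q,k}` onto the subdiamond of `D_{j+q,k}` that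
evolved from the edge `uv` of `D_{j,k}`. Its range is that subdiamond. -/
def subEmbed (ι : Type) {j : ℕ} {u v : diamV ι j} (h : (diamG ι j).Adj u v) :
    (q : ℕ) → (diamG ι q) →g (diamG ι (j + q))
  | 0 =>
    ⟨fun b => bif b then u else v, by
      rintro a b hab
      have hab' : a ≠ b := hab
      cases a <;> cases b
      · exact absurd rfl hab'
      · exact h.symm
      · exact h
      · exact absurd rfl hab'⟩
  | q + 1 =>
    let f := subEmbed ι h q
    ⟨Sum.map f (fun p => (f.mapEdgeSet p.1, p.2)), by
      rintro (a | e) (b | e') hab <;> try exact hab.elim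
      · show f a ∈ (Sym2.map f e'.1.1 : Sym2 (diamV ι (j + q)))
        exact Sym2.mem_map.mpr ⟨_, hab, rfl⟩
      · show f b ∈ (Sym2.map f e.1.1 : Sym2 (diamV ι (j + q)))
        exact Sym2.mem_map.mpr ⟨_, hab, rfl⟩⟩

section Aux
variable (ι : Type) [Nonempty ι]
set_option linter.unusedSectionVars false

lemma edge_exists {V : Type} {G : SimpleGraph V} (e : G.edgeSet) :
    ∃ a b, G.Adj a b ∧ (e : Sym2 V) = s(a, b) := by
  obtain ⟨s, hs⟩ := e
  induction s using Sym2.ind with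
  | _ a b => exact ⟨a, b, (G.mem_edgeSet).mp hs, rfl⟩

lemma diam_adj_inl_inr {m : ℕ} {c : diamV ι m} {e : (diamG ι m).edgeSet} {i : ι} :
    (diamG ι (m + 1)).Adj (Sum.inl c) (Sum.inr (e, i)) ↔ c ∈ (e : Sym2 (diamV ι m)) :=
  Iff.rfl

lemma diam_adj_inr_inl {m : ℕ} {c : diamV ι m} {e : (diamG ι m).edgeSet} {i : ι} :
    (diamG ι (m + 1)).Adj (Sum.inr (e, i)) (Sum.inl c) ↔ c ∈ (e : Sym2 (diamV ι m)) :=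
  Iff.rfl

lemma diam_not_adj_inl_inl {m : ℕ} {c d : diamV ι m} :
    ¬ (diamG ι (m + 1)).Adj (Sum.inl c) (Sum.inl d) := fun h => h

lemma diam_not_adj_inr_inr {m : ℕ} {p p' : (diamG ι m).edgeSet × ι} :
    ¬ (diamG ι (m + 1)).Adj (Sum.inr p) (Sum.inr p') := fun h => h

/-- Double a walk into the next diamond. -/
def doubleWalk (i₀ : ι) {m : ℕ} : {a b : diamV ι m} → (diamG ι m).Walk a b →
    (diamG ι (m + 1)).Walk (Sum.inl a) (Sum.inl b)
  | _, _, .nil => .nil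
  | _, _, .cons h p =>
      .cons (diamMid_adj_left ι h i₀) (.cons (diamMid_adj_right ι h i₀) (doubleWalk i₀ p))

lemma doubleWalk_length (i₀ : ι) {m : ℕ} {a b : diamV ι m} (p : (diamG ι m).Walk a b) :
    (doubleWalk ι i₀ p).length = 2 * p.length := by
  induction p with
  | nil => rfl
  | cons h p ih =>
    show (doubleWalk ι i₀ p).length + 1 + 1 = 2 * (p.length + 1)
    rw [ih]; ring

end Aux
set_option linter.unusedSectionVars false
section Aux2
variable (ι : Type) [Nonempty ι]

lemma diam_connected : ∀ m : ℕ, (diamG ι m).Connected := by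
  intro m
  induction m with
  | zero =>
    have : Nonempty (diamV ι 0) := ⟨false⟩
    refine SimpleGraph.Connected.mk fun a b => ?_
    by_cases hab : a = b
    · exact hab ▸ SimpleGraph.Reachable.refl a
    · exact (SimpleGraph.top_adj a b |>.mpr hab).reachable
  | succ m ih =>
    obtain ⟨i₀⟩ := ‹Nonempty ι›
    have hinl : ∀ a b : diamV ι m, (diamG ι (m + 1)).Reachable (Sum.inl a) (Sum.inl b) :=
      fun a b => ((ih.preconnected a b).elim fun p => ⟨doubleWalk ι i₀ p⟩)
    have hinr : ∀ (e : (diamG ι m).edgeSet) (i : ι),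
        ∃ a : diamV ι m, (diamG ι (m + 1)).Adj (Sum.inr (e, i)) (Sum.inl a) := by
      intro e i
      obtain ⟨a, b, _, he⟩ := edge_exists e
      exact ⟨a, (diam_adj_inr_inl ι).mpr (he ▸ Sym2.mem_mk_left a b)⟩
    have : Nonempty (diamV ι (m + 1)) := ⟨Sum.inl (diamBottom ι m)⟩
    refine SimpleGraph.Connected.mk ?_
    rintro (a | ⟨e, i⟩) (b | ⟨e', i'⟩)
    · exact hinl a b
    · obtain ⟨c, hc⟩ := hinr e' i'
      exact (hinl a c).trans hc.symm.reachable
    · obtain ⟨c, hc⟩ := hinr e i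
      exact hc.reachable.trans (hinl c b)
    · obtain ⟨c, hc⟩ := hinr e i
      obtain ⟨c', hc'⟩ := hinr e' i'
      exact (hc.reachable.trans (hinl c c')).trans hc'.symm.reachable

lemma dist_inl_inl_le {m : ℕ} (a b : diamV ι m) :
    (diamG ι (m + 1)).dist (Sum.inl a) (Sum.inl b) ≤ 2 * (diamG ι m).dist a b := by
  obtain ⟨i₀⟩ := ‹Nonempty ι›
  obtain ⟨p, hp⟩ := (diam_connected ι m).exists_walk_length_eq_dist a b
  calc (diamG ι (m + 1)).dist (Sum.inl a) (Sum.inl b) ≤ (doubleWalk ι i₀ p).length :=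
        SimpleGraph.dist_le _
    _ = 2 * (diamG ι m).dist a b := by rw [doubleWalk_length, hp]

lemma mem_edge_cases {m : ℕ} {e : (diamG ι m).edgeSet} {a c : diamV ι m}
    (ha : a ∈ (e : Sym2 (diamV ι m))) (hc : c ∈ (e : Sym2 (diamV ι m))) :
    a = c ∨ (diamG ι m).Adj a c := by
  obtain ⟨x, y, hxy, he⟩ := edge_exists e
  rw [he, Sym2.mem_iff] at ha hc
  rcases ha with rfl | rfl <;> rcases hc with rfl | rfl
  · exact Or.inl rfl
  · exact Or.inr hxy
  · exact Or.inr hxy.symm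
  · exact Or.inl rfl

lemma walk_half {m : ℕ} : ∀ (L : ℕ) {x y : diamV ι (m + 1)}
    (p : (diamG ι (m + 1)).Walk x y) (a b : diamV ι m),
    x = Sum.inl a → y = Sum.inl b → p.length ≤ L →
    2 * (diamG ι m).dist a b ≤ p.length := by
  intro L
  induction L with
  | zero =>
    intro x y p a b hx hy hL
    have h0 : p.length = 0 := Nat.le_zero.mp hL
    have : x = y := SimpleGraph.Walk.eq_of_length_eq_zero h0
    have hab : a = b := by subst hx; subst this; exact Sum.inl_injective hy
    subst hab
    simp [SimpleGraph.dist_self]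
  | succ L IH =>
    intro x y p a b hx hy hL
    cases p with
    | nil =>
      have hab : a = b := by subst hx; exact Sum.inl_injective hy
      subst hab; simp [SimpleGraph.dist_self]
    | @cons _ z _ h1 p' =>
      subst hx
      rcases z with c | ⟨e, i⟩
      · exact absurd h1 (diam_not_adj_inl_inl ι)
      cases p' with
      | nil => exact absurd hy (by simp)
      | @cons _ z2 _ h2 p'' =>
        rcases z2 with c | pr
        · -- c ∈ e
          have hc : c ∈ (e : Sym2 (diamV ι m)) := (diam_adj_inr_inl ι).mp h2
          have ha : a ∈ (e : Sym2 (diamV ι m)) := (diam_adj_inl_inr ι).mp h1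
          have hrec : 2 * (diamG ι m).dist c b ≤ p''.length := by
            refine IH p'' c b rfl hy ?_
            have hL' : p''.length + 1 + 1 ≤ L + 1 := hL
            exact Nat.le_of_succ_le (Nat.le_of_succ_le_succ hL')
          have hdist : (diamG ι m).dist a b ≤ 1 + (diamG ι m).dist c b := by
            rcases mem_edge_cases ι ha hc with rfl | hadj
            · omega
            · calc (diamG ι m).dist a b ≤
                  (diamG ι m).dist a c + (diamG ι m).dist c b :=
                    (diam_connected ι m).dist_triangle
                _ ≤ 1 + (diamG ι m).dist c b := by
                    have : (diamG ι m).dist a c ≤ 1 :=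
                      SimpleGraph.dist_le (SimpleGraph.Walk.cons hadj SimpleGraph.Walk.nil)
                    omega
          show 2 * (diamG ι m).dist a b ≤ p''.length + 1 + 1
          omega
        · exact absurd h2 (diam_not_adj_inr_inr ι)

lemma dist_inl_inl {m : ℕ} (a b : diamV ι m) :
    (diamG ι (m + 1)).dist (Sum.inl a) (Sum.inl b) = 2 * (diamG ι m).dist a b := by
  refine le_antisymm (dist_inl_inl_le ι a b) ?_
  obtain ⟨p, hp⟩ :=
    (diam_connected ι (m + 1)).exists_walk_length_eq_dist (Sum.inl a) (Sum.inl b)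
  have := walk_half ι p.length p a b rfl rfl le_rfl
  omega

end Aux2
section Aux3
variable (ι : Type) [Nonempty ι]

lemma dist_inr_le {m : ℕ} (e : (diamG ι m).edgeSet) (i : ι) {c t : diamV ι m}
    (hc : c ∈ (e : Sym2 (diamV ι m))) :
    (diamG ι (m + 1)).dist (Sum.inr (e, i)) (Sum.inl t) ≤ 1 + 2 * (diamG ι m).dist c t := by
  have h1 : (diamG ι (m + 1)).Adj (Sum.inr (e, i)) (Sum.inl c) := (diam_adj_inr_inl ι).mpr hc
  calc (diamG ι (m + 1)).dist (Sum.inr (e, i)) (Sum.inl t)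
      ≤ (diamG ι (m + 1)).dist (Sum.inr (e, i)) (Sum.inl c)
        + (diamG ι (m + 1)).dist (Sum.inl c) (Sum.inl t) :=
        (diam_connected ι (m + 1)).dist_triangle
    _ ≤ 1 + 2 * (diamG ι m).dist c t := by
        have hone : (diamG ι (m + 1)).dist (Sum.inr (e, i)) (Sum.inl c) ≤ 1 := by
          exact SimpleGraph.dist_le (SimpleGraph.Walk.cons h1 SimpleGraph.Walk.nil)
        have := dist_inl_inl ι c t
        omega

lemma dist_inr_ge {m : ℕ} (e : (diamG ι m).edgeSet) (i : ι) (t : diamV ι m) :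
    ∃ c ∈ (e : Sym2 (diamV ι m)),
      1 + 2 * (diamG ι m).dist c t ≤ (diamG ι (m + 1)).dist (Sum.inr (e, i)) (Sum.inl t) := by
  obtain ⟨p, hp⟩ :=
    (diam_connected ι (m + 1)).exists_walk_length_eq_dist (Sum.inr (e, i)) (Sum.inl t)
  cases p with
  | @cons _ z _ h1 p' =>
    rcases z with c | pr
    · refine ⟨c, (diam_adj_inr_inl ι).mp h1, ?_⟩
      have := walk_half ι p'.length p' c t rfl rfl le_rfl
      have hp' : p'.length + 1 = (diamG ι (m + 1)).dist (Sum.inr (e, i)) (Sum.inl t) := hp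
      exact ((Nat.add_comm 1 _).trans_le (Nat.succ_le_succ this)).trans_eq hp'
    · exact absurd h1 (diam_not_adj_inr_inr ι)

/-- A proper 2-coloring of the diamond graph. -/
def diamCol : (m : ℕ) → diamV ι m → Bool
  | 0, b => b
  | _ + 1, x => Sum.isRight x

lemma diamCol_adj : ∀ (m : ℕ) {x y : diamV ι m}, (diamG ι m).Adj x y →
    diamCol ι m x ≠ diamCol ι m y
  | 0, x, y, h => by
    have : x ≠ y := h.ne
    exact this
  | m + 1, x, y, h => by
    rcases x with a | p <;> rcases y with b | q
    · exact absurd h (diam_not_adj_inl_inl ι)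
    · simp [diamCol]
    · simp [diamCol]
    · exact absurd h (diam_not_adj_inr_inr ι)

lemma walk_parity {V : Type} {G : SimpleGraph V} (c : V → Bool)
    (hc : ∀ {x y}, G.Adj x y → c x ≠ c y) {x y : V} (p : G.Walk x y) :
    Even p.length ↔ c x = c y := by
  induction p with
  | nil => simp
  | @cons x z y h p ih =>
    have hxz := hc h
    simp only [SimpleGraph.Walk.length_cons, Nat.even_add_one, ih]
    cases hcx : c x <;> cases hcz : c z <;> cases hcy : c y <;> simp_all

lemma dist_adj_ne {m : ℕ} {a b t : diamV ι m} (hab : (diamG ι m).Adj a b) :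
    (diamG ι m).dist a t ≠ (diamG ι m).dist b t := by
  obtain ⟨pa, hpa⟩ := (diam_connected ι m).exists_walk_length_eq_dist a t
  obtain ⟨pb, hpb⟩ := (diam_connected ι m).exists_walk_length_eq_dist b t
  intro hd
  have h1 := walk_parity (diamCol ι m) (fun h => diamCol_adj ι m h) pa
  have h2 := walk_parity (diamCol ι m) (fun h => diamCol_adj ι m h) pb
  rw [hpa, hd] at h1
  rw [hpb] at h2
  have h3 : (diamCol ι m a = diamCol ι m t) ↔ (diamCol ι m b = diamCol ι m t) :=
    h1.symm.trans h2
  have := diamCol_adj ι m hab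
  cases hca : diamCol ι m a <;> cases hcb : diamCol ι m b <;>
    cases hct : diamCol ι m t <;> simp_all

lemma dist_orig_le : ∀ (m : ℕ) (bo : Bool) (y : diamV ι m),
    (diamG ι m).dist y (diamOrig ι m bo) ≤ 2 ^ m
  | 0, bo, y => by
    by_cases h : y = diamOrig ι 0 bo
    · simp [h, SimpleGraph.dist_self]
    · have hadj : (diamG ι 0).Adj y (diamOrig ι 0 bo) := h
      have hone : (diamG ι 0).dist y (diamOrig ι 0 bo) ≤ 1 := by
        simpa using SimpleGraph.dist_le (SimpleGraph.Walk.cons hadj SimpleGraph.Walk.nil)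
      have h0 : (2:ℕ) ^ 0 = 1 := rfl
      omega
  | m + 1, bo, y => by
    have horig : diamOrig ι (m + 1) bo = Sum.inl (diamOrig ι m bo) := rfl
    rcases y with z | ⟨e, i⟩
    · rw [horig, dist_inl_inl ι]
      have h1 := dist_orig_le m bo z
      have h2 : (2:ℕ) ^ (m+1) = 2 * 2 ^ m := by ring
      omega
    · obtain ⟨a, b, hab, he⟩ := edge_exists e
      have ha : a ∈ (e : Sym2 (diamV ι m)) := he ▸ Sym2.mem_mk_left a b
      have hb : b ∈ (e : Sym2 (diamV ι m)) := he ▸ Sym2.mem_mk_right a b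
      have hne := dist_adj_ne ι hab (t := diamOrig ι m bo)
      have h2a := dist_orig_le m bo a
      have h2b := dist_orig_le m bo b
      have hmin : ∃ c ∈ (e : Sym2 (diamV ι m)), (diamG ι m).dist c (diamOrig ι m bo) < 2 ^ m := by
        rcases Nat.lt_or_ge ((diamG ι m).dist a (diamOrig ι m bo)) (2 ^ m) with hlt | hge
        · exact ⟨a, ha, hlt⟩
        · refine ⟨b, hb, ?_⟩
          omega
      obtain ⟨c, hc, hclt⟩ := hmin
      rw [horig]
      have h1 := dist_inr_le ι e i (t := diamOrig ι m bo) hc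
      have h2 : (2:ℕ) ^ (m+1) = 2 * 2 ^ m := by ring
      omega

end Aux3
section Aux4
variable (ι : Type) [Nonempty ι] {j : ℕ} {u v : diamV ι j} (h : (diamG ι j).Adj u v)

lemma subEmbed_zero_true : subEmbed ι h 0 true = u := rfl
lemma subEmbed_zero_false : subEmbed ι h 0 false = v := rfl

lemma subEmbed_succ_inl {q : ℕ} (y : diamV ι q) :
    subEmbed ι h (q + 1) (Sum.inl y) = Sum.inl (subEmbed ι h q y) := rfl

lemma subEmbed_succ_inr {q : ℕ} (e : (diamG ι q).edgeSet) (i : ι) :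
    subEmbed ι h (q + 1) (Sum.inr (e, i)) = Sum.inr ((subEmbed ι h q).mapEdgeSet e, i) := rfl

lemma subEmbed_inj : ∀ q, Function.Injective (subEmbed ι h q)
  | 0 => by
    intro a b hab
    have hne := h.ne
    cases a <;> cases b
    · rfl
    · exact absurd hab.symm hne
    · exact absurd hab hne
    · rfl
  | q + 1 => by
    have hq := subEmbed_inj q
    have hmap : Function.Injective ((subEmbed ι h q).mapEdgeSet) := by
      intro e e' he
      have : Sym2.map (subEmbed ι h q) e.1 = Sym2.map (subEmbed ι h q) e'.1 :=
        congrArg Subtype.val he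
      exact Subtype.ext (Sym2.map.injective hq this)
    rintro (a | ⟨e, i⟩) (b | ⟨e', i'⟩) hab
    · rw [subEmbed_succ_inl, subEmbed_succ_inl] at hab
      exact congrArg Sum.inl (hq (Sum.inl_injective hab))
    · rw [subEmbed_succ_inl, subEmbed_succ_inr] at hab; exact absurd hab (by simp)
    · rw [subEmbed_succ_inl, subEmbed_succ_inr] at hab; exact absurd hab (by simp)
    · rw [subEmbed_succ_inr, subEmbed_succ_inr] at hab
      have hab' := congrArg (Sum.getRight? ·) hab
      simp only [Sum.getRight?, Prod.mk.injEq, Option.some.injEq] at hab'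
      rw [hmap hab'.1, hab'.2]

lemma subEmbed_orig : ∀ q (bo : Bool),
    subEmbed ι h q (diamOrig ι q bo) = diamLift ι j q (bif bo then u else v)
  | 0, bo => by cases bo <;> rfl
  | q + 1, bo => by
    show Sum.inl (subEmbed ι h q (diamOrig ι q bo)) = _
    rw [subEmbed_orig q bo]
    rfl

lemma subEmbed_induced : ∀ q {a' b' : diamV ι q},
    (diamG ι (j + q)).Adj (subEmbed ι h q a') (subEmbed ι h q b') → (diamG ι q).Adj a' b'
  | 0, a', b', hadj => by
    cases a' <;> cases b'
    · exact absurd hadj (diamG ι (j + 0)).irrefl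
    · exact fun hfalse => nomatch hfalse
    · exact fun hfalse => nomatch hfalse
    · exact absurd hadj (diamG ι (j + 0)).irrefl
  | q + 1, a', b', hadj => by
    rcases a' with c | ⟨e, i⟩ <;> rcases b' with d | ⟨e', i'⟩
    · rw [subEmbed_succ_inl, subEmbed_succ_inl] at hadj
      exact absurd hadj (diam_not_adj_inl_inl ι)
    · rw [subEmbed_succ_inl, subEmbed_succ_inr] at hadj
      have : subEmbed ι h q c ∈ Sym2.map (subEmbed ι h q) (e' : Sym2 (diamV ι q)) :=
        (diam_adj_inl_inr ι).mp hadj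
      obtain ⟨z, hz, hfz⟩ := Sym2.mem_map.mp this
      have : z = c := subEmbed_inj ι h q hfz
      exact (diam_adj_inl_inr ι).mpr (this ▸ hz)
    · rw [subEmbed_succ_inr, subEmbed_succ_inl] at hadj
      have : subEmbed ι h q d ∈ Sym2.map (subEmbed ι h q) (e : Sym2 (diamV ι q)) :=
        (diam_adj_inr_inl ι).mp hadj
      obtain ⟨z, hz, hfz⟩ := Sym2.mem_map.mp this
      have : z = d := subEmbed_inj ι h q hfz
      exact (diam_adj_inr_inl ι).mpr (this ▸ hz)
    · rw [subEmbed_succ_inr, subEmbed_succ_inr] at hadj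
      exact absurd hadj (diam_not_adj_inr_inr ι)

lemma subEmbed_mem_range_inl {q : ℕ} {c : diamV ι (j + q)} :
    Sum.inl c ∈ Set.range (subEmbed ι h (q + 1)) ↔ c ∈ Set.range (subEmbed ι h q) := by
  constructor
  · rintro ⟨z, hz⟩
    rcases z with y | ⟨e, i⟩
    · rw [subEmbed_succ_inl] at hz
      exact ⟨y, Sum.inl_injective hz⟩
    · rw [subEmbed_succ_inr] at hz
      exact absurd hz (by simp)
  · rintro ⟨y, hy⟩
    exact ⟨Sum.inl y, by rw [subEmbed_succ_inl, hy]⟩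

lemma subEmbed_mem_range_inr {q : ℕ} {e : (diamG ι (j + q)).edgeSet} {i : ι} :
    Sum.inr (e, i) ∈ Set.range (subEmbed ι h (q + 1)) ↔
      ∃ e' : (diamG ι q).edgeSet, (subEmbed ι h q).mapEdgeSet e' = e := by
  constructor
  · rintro ⟨z, hz⟩
    rcases z with y | ⟨e', i'⟩
    · rw [subEmbed_succ_inl] at hz
      exact absurd hz (by simp)
    · rw [subEmbed_succ_inr] at hz
      have hz' := congrArg (Sum.getRight? ·) hz
      simp only [Sum.getRight?, Prod.mk.injEq, Option.some.injEq] at hz'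
      exact ⟨e', hz'.1⟩
  · rintro ⟨e', he'⟩
    exact ⟨Sum.inr (e', i), by rw [subEmbed_succ_inr, he']⟩

lemma subEmbed_dist_le (q : ℕ) (y : diamV ι q) (bo : Bool) :
    (diamG ι (j + q)).dist (subEmbed ι h q y) (diamLift ι j q (bif bo then u else v)) ≤ 2 ^ q := by
  rw [← subEmbed_orig ι h q bo]
  obtain ⟨p, hp⟩ := (diam_connected ι q).exists_walk_length_eq_dist y (diamOrig ι q bo)
  calc (diamG ι (j + q)).dist (subEmbed ι h q y) (subEmbed ι h q (diamOrig ι q bo))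
      ≤ (p.map (subEmbed ι h q)).length := SimpleGraph.dist_le _
    _ = p.length := SimpleGraph.Walk.length_map _ p
    _ ≤ 2 ^ q := by rw [hp]; exact dist_orig_le ι q bo y

end Aux4
section Aux5
variable (ι : Type) [Nonempty ι]

lemma cross_ranges {j : ℕ} {u v : diamV ι j} (h : (diamG ι j).Adj u v) (i : ι) :
    ∀ q {a b : diamV ι (j + 1 + q)}, (diamG ι (j + 1 + q)).Adj a b →
    a ∈ Set.range (subEmbed ι (diamMid_adj_left ι h i) q) →
    b ∈ Set.range (subEmbed ι (diamMid_adj_right ι h i) q) →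
    (a ∈ Set.range (subEmbed ι (diamMid_adj_left ι h i) q) ∧
      b ∈ Set.range (subEmbed ι (diamMid_adj_left ι h i) q)) ∨
    (a ∈ Set.range (subEmbed ι (diamMid_adj_right ι h i) q) ∧
      b ∈ Set.range (subEmbed ι (diamMid_adj_right ι h i) q))
  | 0, a, b, hadj, ha, hb => by
    obtain ⟨z, hz⟩ := ha
    obtain ⟨z', hz'⟩ := hb
    cases z <;> cases z'
    · -- a = mid, b = inl v : both in R
      exact Or.inr ⟨⟨true, hz⟩, ⟨false, hz'⟩⟩
    · -- a = mid, b = mid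
      exact Or.inr ⟨⟨true, hz⟩, ⟨true, hz'⟩⟩
    · -- a = inl u, b = inl v : impossible
      rw [← hz, ← hz'] at hadj
      exact absurd hadj (diam_not_adj_inl_inl ι)
    · -- a = inl u, b = mid : both in L
      exact Or.inl ⟨⟨true, hz⟩, ⟨false, hz'⟩⟩
  | q + 1, a, b, hadj, ha, hb => by
    rcases a with c | ⟨e, ii⟩ <;> rcases b with d | ⟨e', ii'⟩
    · exact absurd hadj (diam_not_adj_inl_inl ι)
    · -- a = inl c, b = inr(e', ii')
      obtain ⟨e₀, he₀⟩ := (subEmbed_mem_range_inr ι (diamMid_adj_right ι h i)).mp hb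
      have hc : c ∈ (e' : Sym2 (diamV ι (j + 1 + q))) := (diam_adj_inl_inr ι).mp hadj
      rw [← he₀] at hc
      obtain ⟨z, _, hfz⟩ := Sym2.mem_map.mp hc
      have : c ∈ Set.range (subEmbed ι (diamMid_adj_right ι h i) q) := ⟨z, hfz⟩
      exact Or.inr ⟨(subEmbed_mem_range_inl ι (diamMid_adj_right ι h i)).mpr this, hb⟩
    · -- a = inr(e, ii), b = inl d
      obtain ⟨e₀, he₀⟩ := (subEmbed_mem_range_inr ι (diamMid_adj_left ι h i)).mp ha
      have hd : d ∈ (e : Sym2 (diamV ι (j + 1 + q))) := (diam_adj_inr_inl ι).mp hadj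
      rw [← he₀] at hd
      obtain ⟨z, _, hfz⟩ := Sym2.mem_map.mp hd
      have : d ∈ Set.range (subEmbed ι (diamMid_adj_left ι h i) q) := ⟨z, hfz⟩
      exact Or.inl ⟨ha, (subEmbed_mem_range_inl ι (diamMid_adj_left ι h i)).mpr this⟩
    · exact absurd hadj (diam_not_adj_inr_inr ι)

end Aux5
theorem ball_around_generation_vertex (ι : Type) [Nontrivial ι] {j : ℕ}
    {u v : diamV ι j} (h : (diamG ι j).Adj u v) (i : ι) (q : ℕ) :
    {x : diamV ι (j + 1 + q) |
        (diamG ι (j + 1 + q)).dist x (diamLift ι (j + 1) q (diamMid ι h i)) ≤ 2 ^ q} =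
      Set.range (subEmbed ι (diamMid_adj_left ι h i) q) ∪
        Set.range (subEmbed ι (diamMid_adj_right ι h i) q) := by
  have hL := diamMid_adj_left ι h i
  have hR := diamMid_adj_right ι h i
  induction q with
  | zero =>
    ext x
    simp only [Set.mem_setOf_eq, Set.mem_union, Set.mem_range, pow_zero]
    constructor
    · intro hx
      have hx' : (diamG ι (j + 1)).dist x (diamMid ι h i) ≤ 1 := hx
      obtain ⟨p, hp⟩ :=
        (diam_connected ι (j + 1)).exists_walk_length_eq_dist x (diamMid ι h i)
      cases p with
      | nil => exact Or.inr ⟨true, rfl⟩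
      | @cons _ z _ h1 p' =>
        have hz : z = diamMid ι h i := by
          refine SimpleGraph.Walk.eq_of_length_eq_zero (p := p') ?_
          simp only [SimpleGraph.Walk.length_cons] at hp
          omega
        subst hz
        rcases x with c | pr
        · have hc : c ∈ (s(u, v) : Sym2 (diamV ι j)) := (diam_adj_inl_inr ι).mp h1
          rcases Sym2.mem_iff.mp hc with rfl | rfl
          · exact Or.inl ⟨true, rfl⟩
          · exact Or.inr ⟨false, rfl⟩
        · exact absurd h1 (diam_not_adj_inr_inr ι)
    · rintro (⟨z, hz⟩ | ⟨z, hz⟩) <;> cases z <;> rw [← hz]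
      · -- f_L false = mid
        have : (diamG ι (j + 1)).dist (diamMid ι h i) (diamMid ι h i) ≤ 1 := by
          simp [SimpleGraph.dist_self]
        exact this
      · have : (diamG ι (j + 1)).dist (Sum.inl u) (diamMid ι h i) ≤ 1 := by
          exact SimpleGraph.dist_le (SimpleGraph.Walk.cons hL SimpleGraph.Walk.nil)
        exact this
      · have : (diamG ι (j + 1)).dist (Sum.inl v) (diamMid ι h i) ≤ 1 := by
          exact SimpleGraph.dist_le
            (SimpleGraph.Walk.cons hR.symm SimpleGraph.Walk.nil)
        exact this
      · have : (diamG ι (j + 1)).dist (diamMid ι h i) (diamMid ι h i) ≤ 1 := by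
          simp [SimpleGraph.dist_self]
        exact this
  | succ q IH =>
    have IH' : ∀ y : diamV ι (j + 1 + q),
        (diamG ι (j + 1 + q)).dist y (diamLift ι (j + 1) q (diamMid ι h i)) ≤ 2 ^ q ↔
        (y ∈ Set.range (subEmbed ι (diamMid_adj_left ι h i) q) ∨
          y ∈ Set.range (subEmbed ι (diamMid_adj_right ι h i) q)) := by
      intro y
      rw [Set.ext_iff] at IH
      simpa [Set.mem_union] using IH y
    have hpow : (2:ℕ) ^ (q + 1) = 2 * 2 ^ q := by ring
    have hpowpos : 0 < (2:ℕ) ^ q := Nat.pow_pos (by norm_num)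
    set w : diamV ι (j + 1 + q) := diamLift ι (j + 1) q (diamMid ι h i) with hw
    ext x
    simp only [Set.mem_setOf_eq, Set.mem_union]
    constructor
    · intro hx
      rcases x with y | ⟨e, ii⟩
      · -- inl case
        have hx' : (diamG ι (j + 1 + q + 1)).dist (Sum.inl y) (Sum.inl w) ≤ 2 ^ (q + 1) := hx
        rw [dist_inl_inl ι] at hx'
        have hy : (diamG ι (j + 1 + q)).dist y w ≤ 2 ^ q := by omega
        rcases (IH' y).mp hy with hyL | hyR
        · exact Or.inl ((subEmbed_mem_range_inl ι (diamMid_adj_left ι h i)).mpr hyL)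
        · exact Or.inr ((subEmbed_mem_range_inl ι (diamMid_adj_right ι h i)).mpr hyR)
      · -- inr case
        have hx' : (diamG ι (j + 1 + q + 1)).dist (Sum.inr (e, ii)) (Sum.inl w)
            ≤ 2 ^ (q + 1) := hx
        obtain ⟨c, hc, hcle⟩ := dist_inr_ge ι (m := j + 1 + q) e ii w
        have hclt : (diamG ι (j + 1 + q)).dist c w < 2 ^ q := by omega
        obtain ⟨a, b, hab, he⟩ := edge_exists e
        have hball : (diamG ι (j + 1 + q)).dist a w ≤ 2 ^ q ∧
            (diamG ι (j + 1 + q)).dist b w ≤ 2 ^ q := by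
          have htri : ∀ {p r : diamV ι (j + 1 + q)}, (diamG ι (j + 1 + q)).Adj p r →
              (diamG ι (j + 1 + q)).dist r w ≤ 1 + (diamG ι (j + 1 + q)).dist p w := by
            intro p r hpr
            have h1 : (diamG ι (j + 1 + q)).dist r p ≤ 1 := by
              simpa using SimpleGraph.dist_le
                (SimpleGraph.Walk.cons hpr.symm SimpleGraph.Walk.nil)
            have := (diam_connected ι (j + 1 + q)).dist_triangle (u := r) (v := p) (w := w)
            omega
          rw [he, Sym2.mem_iff] at hc
          rcases hc with rfl | rfl
          · exact ⟨by omega, by have := htri hab; omega⟩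
          · exact ⟨by have := htri hab.symm; omega, by omega⟩
        have ha' := (IH' a).mp hball.1
        have hb' := (IH' b).mp hball.2
        have doneL : a ∈ Set.range (subEmbed ι (diamMid_adj_left ι h i) q) →
            b ∈ Set.range (subEmbed ι (diamMid_adj_left ι h i) q) →
            Sum.inr (e, ii) ∈ Set.range (subEmbed ι (diamMid_adj_left ι h i) (q + 1)) := by
          rintro ⟨a₀, ha₀⟩ ⟨b₀, hb₀⟩
          subst ha₀; subst hb₀
          have hadj₀ := subEmbed_induced ι (diamMid_adj_left ι h i) q hab
          refine (subEmbed_mem_range_inr ι (diamMid_adj_left ι h i)).mpr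
            ⟨⟨s(a₀, b₀), hadj₀⟩, Subtype.ext ?_⟩
          show Sym2.map _ s(a₀, b₀) = (e : Sym2 (diamV ι (j + 1 + q)))
          rw [Sym2.map_pair_eq, he]
        have doneR : a ∈ Set.range (subEmbed ι (diamMid_adj_right ι h i) q) →
            b ∈ Set.range (subEmbed ι (diamMid_adj_right ι h i) q) →
            Sum.inr (e, ii) ∈ Set.range (subEmbed ι (diamMid_adj_right ι h i) (q + 1)) := by
          rintro ⟨a₀, ha₀⟩ ⟨b₀, hb₀⟩
          subst ha₀; subst hb₀
          have hadj₀ := subEmbed_induced ι (diamMid_adj_right ι h i) q hab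
          refine (subEmbed_mem_range_inr ι (diamMid_adj_right ι h i)).mpr
            ⟨⟨s(a₀, b₀), hadj₀⟩, Subtype.ext ?_⟩
          show Sym2.map _ s(a₀, b₀) = (e : Sym2 (diamV ι (j + 1 + q)))
          rw [Sym2.map_pair_eq, he]
        rcases ha' with haL | haR <;> rcases hb' with hbL | hbR
        · exact Or.inl (doneL haL hbL)
        · rcases cross_ranges ι h i q hab haL hbR with ⟨h1, h2⟩ | ⟨h1, h2⟩
          · exact Or.inl (doneL h1 h2)
          · exact Or.inr (doneR h1 h2)
        · rcases cross_ranges ι h i q hab.symm hbL haR with ⟨h1, h2⟩ | ⟨h1, h2⟩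
          · exact Or.inl (doneL h2 h1)
          · exact Or.inr (doneR h2 h1)
        · exact Or.inr (doneR haR hbR)
    · intro hx
      rcases x with y | ⟨e, ii⟩
      · have hy : (diamG ι (j + 1 + q)).dist y w ≤ 2 ^ q := by
          refine (IH' y).mpr ?_
          rcases hx with hxL | hxR
          · exact Or.inl ((subEmbed_mem_range_inl ι (diamMid_adj_left ι h i)).mp hxL)
          · exact Or.inr ((subEmbed_mem_range_inl ι (diamMid_adj_right ι h i)).mp hxR)
        have : (diamG ι (j + 1 + q + 1)).dist (Sum.inl y) (Sum.inl w) ≤ 2 ^ (q + 1) := by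
          rw [dist_inl_inl ι]
          omega
        exact this
      · -- inr backward
        have key : ∀ (c : diamV ι (j + 1 + q)), c ∈ (e : Sym2 (diamV ι (j + 1 + q))) →
            (diamG ι (j + 1 + q)).dist c w < 2 ^ q →
            (diamG ι (j + 1 + q + 1)).dist (Sum.inr (e, ii)) (Sum.inl w) ≤ 2 ^ (q + 1) := by
          intro c hc hclt
          have := dist_inr_le ι (m := j + 1 + q) e ii hc (t := w)
          omega
        rcases hx with hxL | hxR
        · obtain ⟨e₀, he₀⟩ := (subEmbed_mem_range_inr ι (diamMid_adj_left ι h i)).mp hxL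
          obtain ⟨a₀, b₀, hab₀, he₀'⟩ := edge_exists e₀
          have hmema : subEmbed ι (diamMid_adj_left ι h i) q a₀ ∈
              (e : Sym2 (diamV ι (j + 1 + q))) := by
            rw [← he₀]
            exact Sym2.mem_map.mpr ⟨a₀, by rw [he₀']; exact Sym2.mem_mk_left a₀ b₀, rfl⟩
          have hmemb : subEmbed ι (diamMid_adj_left ι h i) q b₀ ∈
              (e : Sym2 (diamV ι (j + 1 + q))) := by
            rw [← he₀]
            exact Sym2.mem_map.mpr ⟨b₀, by rw [he₀']; exact Sym2.mem_mk_right a₀ b₀, rfl⟩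
          have hda : (diamG ι (j + 1 + q)).dist
              (subEmbed ι (diamMid_adj_left ι h i) q a₀) w ≤ 2 ^ q :=
            subEmbed_dist_le ι (diamMid_adj_left ι h i) q a₀ false
          have hdb : (diamG ι (j + 1 + q)).dist
              (subEmbed ι (diamMid_adj_left ι h i) q b₀) w ≤ 2 ^ q :=
            subEmbed_dist_le ι (diamMid_adj_left ι h i) q b₀ false
          have hne : (diamG ι (j + 1 + q)).dist
                (subEmbed ι (diamMid_adj_left ι h i) q a₀) w ≠
              (diamG ι (j + 1 + q)).dist (subEmbed ι (diamMid_adj_left ι h i) q b₀) w :=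
            dist_adj_ne ι ((subEmbed ι (diamMid_adj_left ι h i) q).map_adj hab₀)
          rcases Nat.lt_or_ge ((diamG ι (j + 1 + q)).dist
              (subEmbed ι (diamMid_adj_left ι h i) q a₀) w) (2 ^ q) with hlt | hge
          · exact key _ hmema hlt
          · exact key _ hmemb (by omega)
        · obtain ⟨e₀, he₀⟩ := (subEmbed_mem_range_inr ι (diamMid_adj_right ι h i)).mp hxR
          obtain ⟨a₀, b₀, hab₀, he₀'⟩ := edge_exists e₀
          have hmema : subEmbed ι (diamMid_adj_right ι h i) q a₀ ∈
              (e : Sym2 (diamV ι (j + 1 + q))) := by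
            rw [← he₀]
            exact Sym2.mem_map.mpr ⟨a₀, by rw [he₀']; exact Sym2.mem_mk_left a₀ b₀, rfl⟩
          have hmemb : subEmbed ι (diamMid_adj_right ι h i) q b₀ ∈
              (e : Sym2 (diamV ι (j + 1 + q))) := by
            rw [← he₀]
            exact Sym2.mem_map.mpr ⟨b₀, by rw [he₀']; exact Sym2.mem_mk_right a₀ b₀, rfl⟩
          have hda : (diamG ι (j + 1 + q)).dist
              (subEmbed ι (diamMid_adj_right ι h i) q a₀) w ≤ 2 ^ q :=
            subEmbed_dist_le ι (diamMid_adj_right ι h i) q a₀ true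
          have hdb : (diamG ι (j + 1 + q)).dist
              (subEmbed ι (diamMid_adj_right ι h i) q b₀) w ≤ 2 ^ q :=
            subEmbed_dist_le ι (diamMid_adj_right ι h i) q b₀ true
          have hne : (diamG ι (j + 1 + q)).dist
                (subEmbed ι (diamMid_adj_right ι h i) q a₀) w ≠
              (diamG ι (j + 1 + q)).dist (subEmbed ι (diamMid_adj_right ι h i) q b₀) w :=
            dist_adj_ne ι ((subEmbed ι (diamMid_adj_right ι h i) q).map_adj hab₀)
          rcases Nat.lt_or_ge ((diamG ι (j + 1 + q)).dist
              (subEmbed ι (diamMid_adj_right ι h i) q a₀) w) (2 ^ q) with hlt | hge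
          · exact key _ hmema hlt
          · exact key _ hmemb (by omega)
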